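/- Let X be a random vector taking values in Ω with E[‖X‖] < ∞ and E[|φ(X)|] < ∞, and suppose E[X] ∈ Ω. Then for every u ∈ Ω the orthogonality principle holds: E[ℓ_φ(X,u)] = E[ℓ_φ(X, E[X])] + ℓ_φ(E[X], u). -/

import Mathlib

open MeasureTheory

/-- The Bregman divergence associated with a differentiable function `φ` on
`EuclideanSpace ℝ (Fin n)`: `ℓ_φ(u,v) = φ(u) − φ(v) − ⟨u − v, ∇φ(v)⟩`. -/
noncomputable def bregmanDiv {n : ℕ} (φ : EuclideanSpace ℝ (Fin n) → ℝ)
    (u v : EuclideanSpace ℝ (Fin n)) : ℝ :=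
  φ u - φ v - (inner ℝ (u - v) (gradient φ v) : ℝ)

theorem bregman_orthogonality_principle {n : ℕ}
    {α : Type*} [MeasurableSpace α] (μ : Measure α) [IsProbabilityMeasure μ]
    (Ω : Set (EuclideanSpace ℝ (Fin n))) (hΩ : Convex ℝ Ω)
    (φ : EuclideanSpace ℝ (Fin n) → ℝ)
    (U : Set (EuclideanSpace ℝ (Fin n))) (hU : IsOpen U) (hΩU : Ω ⊆ U)
    (hφ : ContDiffOn ℝ 1 φ U) (hconv : StrictConvexOn ℝ Ω φ)
    (X : α → EuclideanSpace ℝ (Fin n)) (hX : Measurable X)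
    (hXΩ : ∀ᵐ ω ∂μ, X ω ∈ Ω)
    (hXint : Integrable X μ)
    (hφXint : Integrable (fun ω => φ (X ω)) μ)
    (hmean : (∫ ω, X ω ∂μ) ∈ Ω) :
    ∀ u ∈ Ω,
      ∫ ω, bregmanDiv φ (X ω) u ∂μ
        = (∫ ω, bregmanDiv φ (X ω) (∫ ω', X ω' ∂μ) ∂μ)
          + bregmanDiv φ (∫ ω, X ω ∂μ) u := by
  intro u hu
  set m := ∫ ω, X ω ∂μ with hm
  have key : ∀ v : EuclideanSpace ℝ (Fin n),
      ∫ ω, bregmanDiv φ (X ω) v ∂μ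
        = (∫ ω, φ (X ω) ∂μ) - φ v - (inner ℝ (m - v) (gradient φ v) : ℝ) := by
    intro v
    have hXv : Integrable (fun ω => X ω - v) μ := hXint.sub (integrable_const v)
    have hinner : Integrable (fun ω => (inner ℝ (X ω - v) (gradient φ v) : ℝ)) μ := by
      have h := ((innerSL ℝ (gradient φ v)).integrable_comp hXv)
      simp only [innerSL_apply_apply] at h
      exact h.congr (Filter.Eventually.of_forall fun ω => real_inner_comm _ _)
    have hEsub : ∫ ω, (X ω - v) ∂μ = m - v := by
      rw [integral_sub hXint (integrable_const v), integral_const]; simp [hm]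
    have hEint : ∫ ω, (inner ℝ (X ω - v) (gradient φ v) : ℝ) ∂μ
        = (inner ℝ (m - v) (gradient φ v) : ℝ) :=
      calc ∫ ω, (inner ℝ (X ω - v) (gradient φ v) : ℝ) ∂μ
          = ∫ ω, (inner ℝ (gradient φ v) (X ω - v) : ℝ) ∂μ := by
            congr 1; ext ω; exact real_inner_comm _ _
        _ = inner ℝ (gradient φ v) (m - v) := by rw [integral_inner hXv, hEsub]
        _ = inner ℝ (m - v) (gradient φ v) := real_inner_comm _ _
    simp only [bregmanDiv]
    have hf : Integrable (fun ω => φ (X ω) - φ v) μ := hφXint.sub (integrable_const _)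
    rw [integral_sub hf hinner, integral_sub hφXint (integrable_const (φ v)),
        integral_const, hEint]
    simp
  rw [key u, key m]
  simp only [bregmanDiv, sub_self, inner_zero_left]
  ring
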